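/- Let C and R be finite nonempty sets and k ≥ 1 an integer with k ≤ |C|·|R|. Let S be chosen uniformly at random among all k-element subsets of C × R. Let c′ be uniform in C and let r′ be uniform in S_{|c′} := {r ∈ R : (c′, r) ∈ S}, where r′ := ⊥ (an element not in R) if S_{|c′} is empty. Independently, let (c″, r″) be uniform in S. Then SD((S, c′, r′); (S, c″, r″)) ≤ 2k²/(|C|·|R|) + √|C|/(2√k). -/

import Mathlib

open Finset
open scoped Classical

lemma count_superset {α : Type*} [DecidableEq α] (s t : Finset α) (k : ℕ) (hts : t ⊆ s)
    (htk : t.card ≤ k) :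
    ((s.powersetCard k).filter (fun A => t ⊆ A)).card = (s.card - t.card).choose (k - t.card) := by
  rw [← card_sdiff_of_subset hts, ← card_powersetCard (k - t.card) (s \ t)]
  apply Finset.card_bij' (fun A _ => A \ t) (fun B _ => B ∪ t)
  · intro A hA
    simp only [mem_filter, mem_powersetCard] at hA
    rw [mem_powersetCard]
    exact ⟨sdiff_subset_sdiff hA.1.1 le_rfl, by rw [card_sdiff_of_subset hA.2, hA.1.2]⟩
  · intro B hB
    rw [mem_powersetCard] at hB
    simp only [mem_filter, mem_powersetCard]
    have hd : Disjoint B t := disjoint_of_subset_left hB.1 sdiff_disjoint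
    refine ⟨⟨union_subset (hB.1.trans (sdiff_subset)) hts, ?_⟩, subset_union_right⟩
    rw [card_union_of_disjoint hd, hB.2]
    omega
  · intro A hA
    simp only [mem_filter, mem_powersetCard] at hA
    exact sdiff_union_of_subset hA.2
  · intro B hB
    rw [mem_powersetCard] at hB
    exact union_sdiff_cancel_right (disjoint_of_subset_left hB.1 sdiff_disjoint)

lemma rowcard {C R : Type*} [Fintype C] [Fintype R] (c : C) (S : Finset (C × R)) :
    (univ.filter fun r : R => (c, r) ∈ S).card = (S.filter fun q => q.1 = c).card := by
  apply Finset.card_nbij' (fun r => (c, r)) (fun q => q.2)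
  · intro r hr
    simp only [mem_coe, mem_filter, mem_univ, true_and] at hr ⊢
    simpa using hr
  · intro q hq
    simp only [mem_coe, mem_filter, mem_univ, true_and, and_true] at hq ⊢
    rw [show (c, q.2) = q from by ext <;> simp [hq.2.symm]]
    exact hq.1
  · intro r _; rfl
  · intro q hq
    simp only [mem_coe, mem_filter] at hq
    ext <;> simp [hq.2.symm]

lemma reduce {C R : Type*} [Fintype C] [Fintype R] (S : Finset (C × R)) (c : C) (B : ℝ)
    (hB : 0 < B) (k : ℕ) (hk : 1 ≤ k) :
    ∑ r : Option R,
        |1 / B * (1 / (Fintype.card C : ℝ)) *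
              (r.elim (if (S.filter fun q => q.1 = c) = ∅ then (1 : ℝ) else 0)
                (fun r' => if (c, r') ∈ S then
                    1 / (((S.filter fun q => q.1 = c).card : ℝ)) else 0)) -
            1 / B * (r.elim (0 : ℝ) (fun r' => if (c, r') ∈ S then 1 / (k : ℝ) else 0))|
      = 1 / B * |1 / (Fintype.card C : ℝ) -
          (((S.filter fun q => q.1 = c).card : ℝ)) / (k : ℝ)| := by
  rw [Fintype.sum_option]
  set a := (S.filter fun q => q.1 = c).card with ha
  by_cases h : (S.filter fun q => q.1 = c) = ∅
  · have ha0 : a = 0 := by rw [ha, h]; simp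
    have hnotin : ∀ r : R, (c, r) ∉ S := by
      intro r hr
      have : (c, r) ∈ S.filter fun q => q.1 = c := by simp [hr]
      simp [h] at this
    simp only [h, if_pos, Option.elim, hnotin, if_false, ha0]
    simp only [Nat.cast_zero, zero_div, sub_zero, mul_zero, mul_one, sub_zero, abs_zero,
      Finset.sum_const_zero, add_zero]
    rw [abs_mul, abs_of_nonneg (by positivity : (0:ℝ) ≤ 1/B)]
  · have ha1 : 1 ≤ a := by
      rw [ha]; exact Nat.one_le_iff_ne_zero.2 (fun h0 => h (card_eq_zero.1 h0))
    have hapos : (0:ℝ) < a := by exact_mod_cast ha1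
    have hkpos : (0:ℝ) < k := by exact_mod_cast hk
    simp only [h, if_neg, Option.elim, mul_zero, sub_zero, abs_zero, mul_zero, sub_self,
      if_false, mul_zero, abs_zero, zero_add]
    have step : ∀ r : R,
        |1 / B * (1 / (Fintype.card C : ℝ)) * (if (c, r) ∈ S then 1 / (a:ℝ) else 0) -
          1 / B * (if (c, r) ∈ S then 1 / (k : ℝ) else 0)|
        = if (c, r) ∈ S then
            |1 / B * (1 / (Fintype.card C : ℝ)) * (1/(a:ℝ)) - 1/B * (1/(k:ℝ))| else 0 := by
      intro r
      by_cases hr : (c, r) ∈ S <;> simp [hr]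
    rw [Finset.sum_congr rfl (fun r _ => step r), ← Finset.sum_filter, Finset.sum_const,
      rowcard c S, ← ha, nsmul_eq_mul]
    have habs : (a:ℝ) * |1 / B * (1 / (Fintype.card C:ℝ)) * (1/(a:ℝ)) - 1/B * (1/(k:ℝ))|
        = |(a:ℝ) * (1 / B * (1 / (Fintype.card C:ℝ)) * (1/(a:ℝ)) - 1/B * (1/(k:ℝ)))| := by
      rw [abs_mul, abs_of_nonneg hapos.le]
    rw [habs, show (a:ℝ) * (1 / B * (1 / (Fintype.card C:ℝ)) * (1/(a:ℝ)) - 1/B * (1/(k:ℝ)))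
        = 1/B * (1/(Fintype.card C:ℝ) - (a:ℝ)/(k:ℝ)) from by
          rw [mul_sub, mul_sub, show (a:ℝ) * (1/B*(1/(Fintype.card C:ℝ))*(1/(a:ℝ)))
            = 1/B*(1/(Fintype.card C:ℝ)) from by
              rw [mul_comm ((1:ℝ)/B * (1/(Fintype.card C:ℝ))) (1/(a:ℝ)), ← mul_assoc,
                mul_one_div, div_self hapos.ne', one_mul]]
          ring,
      abs_mul, abs_of_nonneg (by positivity : (0:ℝ) ≤ 1/B)]


lemma count_mem {α : Type*} [Fintype α] (q : α) (k : ℕ) (hk : 1 ≤ k) :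
    (((univ : Finset α).powersetCard k).filter (fun A => q ∈ A)).card
      = (Fintype.card α - 1).choose (k - 1) := by
  have := count_superset (univ : Finset α) {q} k (subset_univ _) (by simpa using hk)
  simpa using this

lemma count_pair {α : Type*} [Fintype α] (q q' : α) (hqq : q ≠ q') (k : ℕ) (hk : 2 ≤ k) :
    (((univ : Finset α).powersetCard k).filter (fun A => q ∈ A ∧ q' ∈ A)).card
      = (Fintype.card α - 2).choose (k - 2) := by
  have hc : ({q, q'} : Finset α).card = 2 := card_pair hqq
  have := count_superset (univ : Finset α) {q, q'} k (subset_univ _) (by rw [hc]; exact hk)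
  rw [hc, card_univ] at this
  rw [← this]
  congr 1
  apply filter_congr
  intro A _
  simp [insert_subset_iff]

lemma sumA1 {α : Type*} [Fintype α] (row : Finset α) (k : ℕ) (hk : 1 ≤ k) :
    ∑ S ∈ (univ : Finset α).powersetCard k, (row.filter (· ∈ S)).card
      = row.card * (Fintype.card α - 1).choose (k - 1) := by
  have h1 : ∀ S : Finset α, (row.filter (· ∈ S)).card = ∑ q ∈ row, if q ∈ S then 1 else 0 :=
    fun S => Finset.card_filter _ _
  simp_rw [h1]
  rw [Finset.sum_comm]
  have h2 : ∀ q ∈ row, (∑ S ∈ (univ : Finset α).powersetCard k, if q ∈ S then 1 else 0)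
      = (Fintype.card α - 1).choose (k - 1) := by
    intro q _
    rw [← Finset.card_filter, count_mem q k hk]
  rw [Finset.sum_congr rfl h2, Finset.sum_const, smul_eq_mul]

lemma sumA2 {α : Type*} [Fintype α] (row : Finset α) (k : ℕ) (hk : 2 ≤ k) :
    ∑ S ∈ (univ : Finset α).powersetCard k, ((row.filter (· ∈ S)).card) ^ 2
      = row.card * (Fintype.card α - 1).choose (k - 1)
        + row.card * (row.card - 1) * (Fintype.card α - 2).choose (k - 2) := by
  have h1 : ∀ S : Finset α, ((row.filter (· ∈ S)).card) ^ 2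
      = ∑ q ∈ row, ∑ q' ∈ row, if q ∈ S ∧ q' ∈ S then 1 else 0 := by
    intro S
    rw [Finset.card_filter, sq, Finset.sum_mul_sum]
    apply Finset.sum_congr rfl; intro q _
    apply Finset.sum_congr rfl; intro q' _
    by_cases h : q ∈ S <;> by_cases h' : q' ∈ S <;> simp [h, h']
  simp_rw [h1]
  rw [Finset.sum_comm]
  have h2 : ∀ q ∈ row, (∑ S ∈ (univ : Finset α).powersetCard k, ∑ q' ∈ row,
        if q ∈ S ∧ q' ∈ S then 1 else 0)
      = (Fintype.card α - 1).choose (k - 1)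
        + (row.card - 1) * (Fintype.card α - 2).choose (k - 2) := by
    intro q hq
    rw [Finset.sum_comm]
    have h3 : ∀ q' ∈ row, (∑ S ∈ (univ : Finset α).powersetCard k,
          if q ∈ S ∧ q' ∈ S then 1 else 0)
        = if q' = q then (Fintype.card α - 1).choose (k - 1)
          else (Fintype.card α - 2).choose (k - 2) := by
      intro q' _
      rw [← Finset.card_filter]
      by_cases h : q' = q
      · subst h
        rw [if_pos rfl, ← count_mem q' k (le_trans one_le_two hk)]
        congr 1
        apply filter_congr; intro A _; simp
      · rw [if_neg h, count_pair q q' (fun hh => h hh.symm) k hk]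
    rw [Finset.sum_congr rfl h3, ← Finset.add_sum_erase _ _ hq, if_pos rfl]
    congr 1
    have h4 : ∀ q' ∈ row.erase q, (if q' = q then (Fintype.card α - 1).choose (k - 1)
        else (Fintype.card α - 2).choose (k - 2)) = (Fintype.card α - 2).choose (k - 2) := by
      intro q' hq'
      rw [if_neg (ne_of_mem_erase hq')]
    rw [Finset.sum_congr rfl h4, Finset.sum_const, smul_eq_mul, card_erase_of_mem hq]
  rw [Finset.sum_congr rfl h2, Finset.sum_const, smul_eq_mul]
  ring


lemma var_bound {α : Type*} [Fintype α] (row : Finset α) (k n m : ℕ) (hn : 1 ≤ n)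
    (hm1 : 1 ≤ m) (hm : row.card = m) (hN : Fintype.card α = n * m) (hk1 : 1 ≤ k)
    (hk2 : k ≤ n * m) :
    ∑ S ∈ (univ : Finset α).powersetCard k,
        (((row.filter (· ∈ S)).card : ℝ) - (k : ℝ) / (n : ℝ)) ^ 2
      ≤ ((n * m).choose k : ℝ) * (k : ℝ) / (n : ℝ) := by
  set N := n * m with hNdef
  have hN1 : 1 ≤ N := le_trans hk1 hk2
  set B : ℝ := ((N.choose k : ℕ) : ℝ) with hBdef
  have hBpos : (0 : ℝ) < B := by rw [hBdef]; exact_mod_cast Nat.choose_pos hk2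
  have hnR : (0:ℝ) < n := by exact_mod_cast hn
  have hkR : (0:ℝ) < k := by exact_mod_cast hk1
  have hmR : (0:ℝ) < m := by exact_mod_cast hm1
  have e1 : N * (N - 1).choose (k - 1) = N.choose k * k := by
    have h := Nat.add_one_mul_choose_eq (N - 1) (k - 1)
    rwa [show N - 1 + 1 = N from by omega, show k - 1 + 1 = k from by omega] at h
  have firstR : ((m * (N - 1).choose (k - 1) : ℕ) : ℝ) = B * ((k:ℝ)/n) := by
    rw [mul_div_assoc', eq_div_iff hnR.ne']
    have hnat : m * (N - 1).choose (k - 1) * n = N.choose k * k := by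
      rw [← e1, hNdef]; ring
    rw [hBdef]
    exact_mod_cast congrArg (Nat.cast : ℕ → ℝ) hnat
  have SX : (∑ S ∈ (univ : Finset α).powersetCard k,
      ((row.filter (· ∈ S)).card : ℝ)) = B * ((k:ℝ) / n) := by
    have h := sumA1 row k hk1
    rw [hm, hN] at h
    have hcast : (∑ S ∈ (univ : Finset α).powersetCard k,
        ((row.filter (· ∈ S)).card : ℝ)) = ((m * (N - 1).choose (k - 1) : ℕ) : ℝ) := by
      exact_mod_cast congrArg (Nat.cast : ℕ → ℝ) h
    rw [hcast, firstR]
  have SX2 : (∑ S ∈ (univ : Finset α).powersetCard k,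
      ((row.filter (· ∈ S)).card : ℝ) ^ 2) ≤ B * ((k:ℝ)/n) + B * ((k:ℝ)/n)^2 := by
    rcases eq_or_lt_of_le hk1 with hk1' | hk2'
    · have hsq : ∀ S ∈ (univ : Finset α).powersetCard k,
          ((row.filter (· ∈ S)).card : ℝ) ^ 2 = ((row.filter (· ∈ S)).card : ℝ) := by
        intro S hS
        rw [mem_powersetCard] at hS
        have hsub : (row.filter (· ∈ S)) ⊆ S := fun q hq => (mem_filter.1 hq).2
        have hle : (row.filter (· ∈ S)).card ≤ k := hS.2 ▸ card_le_card hsub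
        have : (row.filter (· ∈ S)).card = 0 ∨ (row.filter (· ∈ S)).card = 1 := by omega
        rcases this with h | h <;> rw [h] <;> norm_num
      rw [Finset.sum_congr rfl hsq, SX]
      nlinarith [sq_nonneg ((k:ℝ)/n), mul_pos hBpos (div_pos hkR hnR)]
    · have hk2' : 2 ≤ k := hk2'
      have hN2 : 2 ≤ N := le_trans hk2' hk2
      have e2 : (N - 1) * (N - 2).choose (k - 2) = (N - 1).choose (k - 1) * (k - 1) := by
        have h := Nat.add_one_mul_choose_eq (N - 2) (k - 2)
        rwa [show N - 2 + 1 = N - 1 from by omega, show k - 2 + 1 = k - 1 from by omega] at h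
      have key : n * (m - 1) * (k - 1) ≤ k * (N - 1) := by
        obtain ⟨m', rfl⟩ : ∃ m', m = m' + 1 := ⟨m - 1, by omega⟩
        obtain ⟨k', rfl⟩ : ∃ k', k = k' + 1 := ⟨k - 1, by omega⟩
        obtain ⟨n', rfl⟩ : ∃ n', n = n' + 1 := ⟨n - 1, by omega⟩
        simp only [Nat.add_sub_cancel, hNdef]
        have h5 : (n' + 1) * (m' + 1) - 1 = (n' + 1) * m' + n' := by
          have : (n' + 1) * (m' + 1) = (n' + 1) * m' + n' + 1 := by ring
          omega
        rw [h5]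
        nlinarith
      have pairR : ((m * (m - 1) * (N - 2).choose (k - 2) : ℕ) : ℝ) ≤ B * ((k:ℝ)/n)^2 := by
        have hNR : (0:ℝ) < N := by positivity
        have hN1R : (0:ℝ) < ((N - 1 : ℕ) : ℝ) := by
          have : 1 ≤ N - 1 := by omega
          exact_mod_cast this
        have e3 : N * ((N-1) * (N - 2).choose (k - 2)) = N.choose k * k * (k-1) := by
          rw [e2, ← mul_assoc, e1]
        have e3R : (N:ℝ) * ((N-1:ℕ):ℝ) * (((N-2).choose (k-2) : ℕ):ℝ)
            = B * k * ((k-1:ℕ):ℝ) := by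
          rw [hBdef]
          exact_mod_cast congrArg (Nat.cast : ℕ → ℝ) (by rw [← e3]; ring)
        rw [div_pow, ← mul_div_assoc, le_div_iff₀ (by positivity)]
        have keyR : (n:ℝ) * ((m-1:ℕ):ℝ) * ((k-1:ℕ):ℝ) ≤ (k:ℝ) * ((N-1:ℕ):ℝ) := by
          exact_mod_cast key
        have expand : ((m * (m - 1) * (N - 2).choose (k - 2) : ℕ) : ℝ)
            = (m:ℝ) * ((m-1:ℕ):ℝ) * (((N-2).choose (k-2) : ℕ):ℝ) := by push_cast; ring
        rw [expand]
        have ch2R : (((N-2).choose (k-2) : ℕ):ℝ)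
            = B * k * ((k-1:ℕ):ℝ) / ((N:ℝ) * ((N-1:ℕ):ℝ)) := by
          rw [eq_div_iff (by positivity), ← e3R]; ring
        rw [ch2R, show (m:ℝ) * ((m-1:ℕ):ℝ) * (B * k * ((k-1:ℕ):ℝ) / ((N:ℝ) * ((N-1:ℕ):ℝ))) * (n:ℝ)^2
            = ((m:ℝ) * ((m-1:ℕ):ℝ) * (B * (k:ℝ) * ((k-1:ℕ):ℝ)) * (n:ℝ)^2) / ((N:ℝ) * ((N-1:ℕ):ℝ))
            from by ring, div_le_iff₀ (by positivity)]
        have hNeq : (N:ℝ) = (n:ℝ) * m := by exact_mod_cast congrArg (Nat.cast : ℕ → ℝ) hNdef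
        calc (m:ℝ) * ((m-1:ℕ):ℝ) * (B * (k:ℝ) * ((k-1:ℕ):ℝ)) * (n:ℝ)^2
            = ((n:ℝ) * ((m-1:ℕ):ℝ) * ((k-1:ℕ):ℝ)) * ((k:ℝ) * m * n * B) := by ring
          _ ≤ ((k:ℝ) * ((N-1:ℕ):ℝ)) * ((k:ℝ) * m * n * B) :=
              mul_le_mul_of_nonneg_right keyR (by positivity)
          _ = B * (k:ℝ)^2 * ((N:ℝ) * ((N-1:ℕ):ℝ)) := by rw [hNeq]; ring
      have h := sumA2 row k hk2'
      rw [hm, hN] at h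
      have hcast : (∑ S ∈ (univ : Finset α).powersetCard k,
          ((row.filter (· ∈ S)).card : ℝ) ^ 2)
          = ((m * (N - 1).choose (k - 1) : ℕ) : ℝ)
            + ((m * (m-1) * (N - 2).choose (k - 2) : ℕ) : ℝ) := by
        exact_mod_cast congrArg (Nat.cast : ℕ → ℝ) h
      rw [hcast, firstR]
      linarith [pairR]
  -- expansion of the variance sum
  have hPcard : (((univ : Finset α).powersetCard k).card : ℝ) = B := by
    rw [card_powersetCard, card_univ, hN, hBdef]
  have expand : ∑ S ∈ (univ : Finset α).powersetCard k,
      (((row.filter (· ∈ S)).card : ℝ) - (k : ℝ) / (n : ℝ)) ^ 2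
      = (∑ S ∈ (univ : Finset α).powersetCard k, ((row.filter (· ∈ S)).card : ℝ) ^ 2)
        - 2 * ((k:ℝ)/n) * (∑ S ∈ (univ : Finset α).powersetCard k,
            ((row.filter (· ∈ S)).card : ℝ))
        + B * ((k:ℝ)/n)^2 := by
    have hmid : ∑ S ∈ (univ : Finset α).powersetCard k,
        2 * ((row.filter (· ∈ S)).card : ℝ) * ((k:ℝ)/n)
        = 2 * ((k:ℝ)/n) * ∑ S ∈ (univ : Finset α).powersetCard k,
            ((row.filter (· ∈ S)).card : ℝ) := by
      rw [Finset.mul_sum]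
      exact Finset.sum_congr rfl fun S _ => by ring
    rw [Finset.sum_congr rfl (fun S _ => sub_sq ((((row.filter (· ∈ S)).card : ℝ))) ((k:ℝ)/n)),
      Finset.sum_add_distrib, Finset.sum_sub_distrib, Finset.sum_const,
      nsmul_eq_mul, hPcard, hmid]
  rw [expand, SX, show (((n*m).choose k : ℕ) : ℝ) * (k:ℝ) / (n:ℝ) = B * ((k:ℝ)/(n:ℝ)) from by
    rw [hBdef, hNdef]; ring]
  nlinarith [SX2]
theorem stmt4 {C R : Type*} [Fintype C] [Fintype R] [Nonempty C] [Nonempty R]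
    (k : ℕ) (hk1 : 1 ≤ k) (hk2 : k ≤ Fintype.card C * Fintype.card R) :
    (1 / 2 : ℝ) * ∑ S ∈ (Finset.univ : Finset (C × R)).powersetCard k, ∑ c : C,
        ∑ r : Option R,
        |(1 / (((Finset.univ : Finset (C × R)).powersetCard k).card : ℝ)) *
              (1 / (Fintype.card C : ℝ)) *
              (r.elim (if (S.filter fun q => q.1 = c) = ∅ then (1 : ℝ) else 0)
                (fun r' => if (c, r') ∈ S then
                    1 / (((S.filter fun q => q.1 = c).card : ℝ)) else 0)) -
            (1 / (((Finset.univ : Finset (C × R)).powersetCard k).card : ℝ)) *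
              (r.elim (0 : ℝ) (fun r' => if (c, r') ∈ S then 1 / (k : ℝ) else 0))|
      ≤ 2 * (k : ℝ) ^ 2 / ((Fintype.card C : ℝ) * (Fintype.card R : ℝ)) +
          Real.sqrt (Fintype.card C) / (2 * Real.sqrt k) := by
  have hn : 1 ≤ Fintype.card C := Fintype.card_pos
  have hm : 1 ≤ Fintype.card R := Fintype.card_pos
  set n := Fintype.card C with hndef
  set m := Fintype.card R with hmdef
  have hN : Fintype.card (C × R) = n * m := Fintype.card_prod C R
  set P := (Finset.univ : Finset (C × R)).powersetCard k with hPdef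
  have hPcard : (P.card : ℝ) = (((n*m).choose k : ℕ) : ℝ) := by
    rw [hPdef, card_powersetCard, card_univ, hN]
  have hBpos : (0:ℝ) < (P.card : ℝ) := by
    rw [hPcard]; exact_mod_cast Nat.choose_pos hk2
  have hnR : (0:ℝ) < n := by exact_mod_cast hn
  have hmR : (0:ℝ) < m := by exact_mod_cast hm
  have hkR : (0:ℝ) < k := by exact_mod_cast hk1
  have hsn : (0:ℝ) < Real.sqrt n := Real.sqrt_pos.2 hnR
  have hsk : (0:ℝ) < Real.sqrt k := Real.sqrt_pos.2 hkR
  -- step 1 : collapse the Option sum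
  have h1 : ∀ S ∈ P, (∑ c : C, ∑ r : Option R,
        |(1 / ((P.card : ℕ) : ℝ)) * (1 / (n : ℝ)) *
              (r.elim (if (S.filter fun q => q.1 = c) = ∅ then (1 : ℝ) else 0)
                (fun r' => if (c, r') ∈ S then
                    1 / (((S.filter fun q => q.1 = c).card : ℝ)) else 0)) -
            (1 / ((P.card : ℕ) : ℝ)) *
              (r.elim (0 : ℝ) (fun r' => if (c, r') ∈ S then 1 / (k : ℝ) else 0))|)
      = ∑ c : C, 1 / ((P.card : ℕ) : ℝ) *
          |1 / (n : ℝ) - (((S.filter fun q => q.1 = c).card : ℝ)) / (k : ℝ)| := by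
    intro S _
    exact Finset.sum_congr rfl fun c _ => reduce S c _ hBpos k hk1
  rw [Finset.sum_congr rfl h1, Finset.sum_comm]
  -- step 2 : per-column bound
  have key : ∀ c : C, (∑ S ∈ P, 1 / ((P.card : ℕ) : ℝ) *
        |1 / (n : ℝ) - (((S.filter fun q => q.1 = c).card : ℝ)) / (k : ℝ)|)
      ≤ 1 / (Real.sqrt n * Real.sqrt k) := by
    intro c
    set row : Finset (C × R) := univ.filter (fun q => q.1 = c) with hrowdef
    have hrowcard : row.card = m := by
      rw [hrowdef, ← rowcard c univ]
      simp [hmdef]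
    have hfilter : ∀ S : Finset (C × R), row.filter (· ∈ S) = S.filter (fun q => q.1 = c) := by
      intro S
      ext q
      simp only [hrowdef, mem_filter, mem_univ, true_and]
      tauto
    have varb := var_bound row k n m hn hm hrowcard hN hk1 hk2
    -- abbreviate x S
    set x : Finset (C × R) → ℝ :=
      fun S => ((S.filter (fun q => q.1 = c)).card : ℝ) / k - 1 / (n : ℝ) with hxdef
    have habs : ∀ S : Finset (C × R),
        |1 / (n : ℝ) - (((S.filter fun q => q.1 = c).card : ℝ)) / (k : ℝ)| = |x S| := by
      intro S; rw [hxdef]; exact abs_sub_comm _ _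
    have hsumx2 : (∑ S ∈ P, (x S) ^ 2) ≤ (P.card : ℝ) / ((n : ℝ) * k) := by
      have heq : ∀ S ∈ P, (x S) ^ 2
          = (((row.filter (· ∈ S)).card : ℝ) - (k : ℝ) / (n : ℝ)) ^ 2 / (k:ℝ)^2 := by
        intro S _
        rw [hxdef, hfilter S]
        rw [show ((S.filter (fun q => q.1 = c)).card : ℝ) - (k:ℝ)/(n:ℝ)
            = (((S.filter (fun q => q.1 = c)).card : ℝ) / k - 1/(n:ℝ)) * k from by
          rw [sub_mul, div_mul_cancel₀ _ hkR.ne', one_div_mul_eq_div]]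
        rw [mul_pow, mul_div_assoc, div_self (by positivity : ((k:ℝ)^2) ≠ 0), mul_one]
      rw [Finset.sum_congr rfl heq, ← Finset.sum_div]
      rw [div_le_div_iff₀ (by positivity) (by positivity)]
      calc (∑ S ∈ P, (((row.filter (· ∈ S)).card : ℝ) - (k : ℝ) / (n : ℝ)) ^ 2) * ((n:ℝ) * k)
          ≤ ((((n*m).choose k : ℕ) : ℝ) * (k:ℝ) / (n:ℝ)) * ((n:ℝ) * k) := by
            apply mul_le_mul_of_nonneg_right _ (by positivity)
            convert varb using 2 <;> congr!
        _ = (P.card : ℝ) * (k:ℝ)^2 := by rw [hPcard]; field_simp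
    -- Cauchy-Schwarz
    have hCS : (∑ S ∈ P, |x S|) ^ 2 ≤ (∑ S ∈ P, (x S)^2) * (P.card : ℝ) := by
      have h := Finset.sum_mul_sq_le_sq_mul_sq P (fun S => |x S|) (fun _ => (1:ℝ))
      simp only [mul_one, one_pow, Finset.sum_const, nsmul_eq_mul, sq_abs] at h
      calc (∑ S ∈ P, |x S|) ^ 2 ≤ (∑ S ∈ P, (x S)^2) * ((P.card : ℝ) * 1) := by
            simpa using h
        _ = (∑ S ∈ P, (x S)^2) * (P.card : ℝ) := by ring
    have hsum_abs : (∑ S ∈ P, |x S|) ≤ (P.card : ℝ) / (Real.sqrt n * Real.sqrt k) := by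
      have h0 : (0:ℝ) ≤ ∑ S ∈ P, |x S| := Finset.sum_nonneg fun S _ => abs_nonneg _
      have h2 : (∑ S ∈ P, |x S|) ^ 2 ≤ ((P.card : ℝ) / (Real.sqrt n * Real.sqrt k)) ^ 2 := by
        calc (∑ S ∈ P, |x S|) ^ 2 ≤ (∑ S ∈ P, (x S)^2) * (P.card : ℝ) := hCS
          _ ≤ ((P.card : ℝ) / ((n : ℝ) * k)) * (P.card : ℝ) :=
              mul_le_mul_of_nonneg_right hsumx2 hBpos.le
          _ = ((P.card : ℝ) / (Real.sqrt n * Real.sqrt k)) ^ 2 := by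
              rw [div_pow, mul_pow, Real.sq_sqrt hnR.le, Real.sq_sqrt hkR.le]
              ring
      have h3 := Real.sqrt_le_sqrt h2
      rwa [Real.sqrt_sq h0, Real.sqrt_sq (by positivity)] at h3
    rw [← Finset.mul_sum]
    rw [Finset.sum_congr rfl fun S _ => habs S]
    rw [div_mul_eq_mul_div, one_mul, div_le_div_iff₀ hBpos (by positivity)]
    calc (∑ S ∈ P, |x S|) * (Real.sqrt n * Real.sqrt k)
        ≤ ((P.card : ℝ) / (Real.sqrt n * Real.sqrt k)) * (Real.sqrt n * Real.sqrt k) :=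
          mul_le_mul_of_nonneg_right hsum_abs (by positivity)
      _ = (P.card : ℝ) := by field_simp
      _ = 1 * (P.card : ℝ) := by ring
  -- step 3 : finish
  have htot : (∑ c : C, ∑ S ∈ P, 1 / ((P.card : ℕ) : ℝ) *
        |1 / (n : ℝ) - (((S.filter fun q => q.1 = c).card : ℝ)) / (k : ℝ)|)
      ≤ (n : ℝ) * (1 / (Real.sqrt n * Real.sqrt k)) := by
    calc (∑ c : C, ∑ S ∈ P, 1 / ((P.card : ℕ) : ℝ) *
        |1 / (n : ℝ) - (((S.filter fun q => q.1 = c).card : ℝ)) / (k : ℝ)|)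
        ≤ ∑ _c : C, 1 / (Real.sqrt n * Real.sqrt k) :=
          Finset.sum_le_sum fun c _ => key c
      _ = (n : ℝ) * (1 / (Real.sqrt n * Real.sqrt k)) := by
          rw [Finset.sum_const, nsmul_eq_mul, card_univ]
  have hfin : (1/2 : ℝ) * ((n : ℝ) * (1 / (Real.sqrt n * Real.sqrt k)))
      = Real.sqrt n / (2 * Real.sqrt k) := by
    field_simp
    nlinarith [Real.mul_self_sqrt hnR.le, hsn, hsk]
  have hpos : (0:ℝ) ≤ 2 * (k : ℝ) ^ 2 / ((n : ℝ) * (m : ℝ)) := by positivity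
  calc (1 / 2 : ℝ) * (∑ c : C, ∑ S ∈ P, 1 / ((P.card : ℕ) : ℝ) *
        |1 / (n : ℝ) - (((S.filter fun q => q.1 = c).card : ℝ)) / (k : ℝ)|)
      ≤ (1/2 : ℝ) * ((n : ℝ) * (1 / (Real.sqrt n * Real.sqrt k))) := by
        apply mul_le_mul_of_nonneg_left htot (by norm_num)
    _ = Real.sqrt n / (2 * Real.sqrt k) := hfin
    _ ≤ 2 * (k : ℝ) ^ 2 / ((n : ℝ) * (m : ℝ)) + Real.sqrt n / (2 * Real.sqrt k) := by
        linarith [hpos]
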